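/- Let B be a right intensity matrix over Z with nonempty transient index set T and recurrent set R := Z\T, and P := lim_{t→∞} exp(t·B). Then P_T = 0, B_{T,R}·P_R + B_T·P_{T,R} = 0, B_T is invertible, and hence P_{T,R} = −B_T^{-1}·B_{T,R}·P_R. -/

import Mathlib

open Matrix Filter

/-- A square matrix is reducible if some nonempty proper subset `I` of the index set
satisfies `A i j = 0` for all `i ∈ I`, `j ∉ I`. -/
def Matrix.IsReducible {Z : Type*} (A : Matrix Z Z ℝ) : Prop :=
  ∃ I : Set Z, I.Nonempty ∧ I ≠ Set.univ ∧ ∀ i ∈ I, ∀ j ∉ I, A i j = 0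

/-- `J` is a recurrence class with respect to `A`: the rows of `J` vanish outside `J`
and the principal submatrix `A_J` is irreducible. -/
def Matrix.IsRecClass {Z : Type*} (A : Matrix Z Z ℝ) (J : Finset Z) : Prop :=
  J.Nonempty ∧ (∀ i ∈ J, ∀ j, j ∉ J → A i j = 0) ∧
    ¬ (A.submatrix (Subtype.val : {x // x ∈ J} → Z) Subtype.val).IsReducible

/-- An index is recurrent if it belongs to some recurrence class. -/
def Matrix.Recurrent {Z : Type*} (A : Matrix Z Z ℝ) (r : Z) : Prop :=
  ∃ J : Finset Z, r ∈ J ∧ A.IsRecClass J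

/-- Every nonempty closed set contains a recurrent index. -/
lemma exists_recurrent_of_closed {Z : Type*} [Fintype Z] [DecidableEq Z] (A : Matrix Z Z ℝ) :
    ∀ J : Finset Z, J.Nonempty → (∀ i ∈ J, ∀ j ∉ J, A i j = 0) → ∃ r ∈ J, A.Recurrent r := by
  classical
  intro J
  induction J using Finset.strongInduction with
  | _ J ih =>
    intro hJne hJcl
    by_cases hred : (A.submatrix (Subtype.val : {x // x ∈ J} → Z) Subtype.val).IsReducible
    · obtain ⟨I, hIne, hIuniv, hI⟩ := hred
      set J' : Finset Z := J.filter (fun z => ∃ h : z ∈ J, (⟨z, h⟩ : {x // x ∈ J}) ∈ I) with hJ'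
      have hsub : J' ⊆ J := Finset.filter_subset _ _
      have hne' : J'.Nonempty := by
        obtain ⟨x, hx⟩ := hIne
        exact ⟨x.1, Finset.mem_filter.2 ⟨x.2, x.2, hx⟩⟩
      have hproper : J' ⊂ J := by
        refine ⟨hsub, fun hJsub => hIuniv ?_⟩
        ext x
        simp only [Set.mem_univ, iff_true]
        have hx := hJsub x.2
        rw [hJ', Finset.mem_filter] at hx
        obtain ⟨-, h, hxI⟩ := hx
        exact hxI
      have hcl' : ∀ i ∈ J', ∀ j ∉ J', A i j = 0 := by
        intro i hi j hj
        rw [hJ', Finset.mem_filter] at hi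
        obtain ⟨hiJ, hiJ2, hiI⟩ := hi
        by_cases hjJ : j ∈ J
        · have hjI : (⟨j, hjJ⟩ : {x // x ∈ J}) ∉ I := fun hmem =>
            hj (Finset.mem_filter.2 ⟨hjJ, hjJ, hmem⟩)
          exact hI ⟨i, hiJ2⟩ hiI ⟨j, hjJ⟩ hjI
        · exact hJcl i hiJ j hjJ
      obtain ⟨r, hr, hrec⟩ := ih J' hproper hne' hcl'
      exact ⟨r, hsub hr, hrec⟩
    · obtain ⟨r, hr⟩ := hJne
      exact ⟨r, hr, J, hr, ⟨r, hr⟩, fun i hi j hj => hJcl i hi j hj, hred⟩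

lemma recurrent_row_eq_zero {Z : Type*} [Fintype Z] [DecidableEq Z] {A : Matrix Z Z ℝ}
    {k t : Z} (hk : A.Recurrent k) (ht : ¬ A.Recurrent t) : A k t = 0 := by
  obtain ⟨J, hkJ, hJne, hrowJ, hirr⟩ := hk
  exact hrowJ k hkJ t (fun htJ => ht ⟨J, htJ, hJne, hrowJ, hirr⟩)

/-- The transient principal block of a right intensity matrix is invertible. -/
lemma transient_block_isUnit {Z : Type*} [Fintype Z] [DecidableEq Z]
    (B : Matrix Z Z ℝ)
    (hoff : ∀ i j, i ≠ j → 0 ≤ B i j)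
    (hrow : ∀ i, ∑ j, B i j = 0)
    (T : Finset Z)
    (hT : ∀ i, i ∈ T ↔ ¬ B.Recurrent i) :
    IsUnit (B.submatrix (Subtype.val : {x // x ∈ T} → Z) (Subtype.val : {x // x ∈ T} → Z)) := by
  classical
  rw [Matrix.isUnit_iff_isUnit_det, isUnit_iff_ne_zero]
  intro hdet
  obtain ⟨v, hv0, hvB⟩ := (Matrix.exists_mulVec_eq_zero_iff).2 hdet
  obtain ⟨j0, hj0⟩ := Function.ne_iff.1 hv0
  haveI : Nonempty {x // x ∈ T} := ⟨j0⟩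
  obtain ⟨i0, hi0⟩ := Finite.exists_max (fun i : {x // x ∈ T} => |v i|)
  set c := |v i0| with hc_def
  have hc : 0 < c := lt_of_lt_of_le (abs_pos.2 hj0) (hi0 j0)
  set s : ℝ := if 0 ≤ v i0 then 1 else -1 with hs_def
  set w : {x // x ∈ T} → ℝ := s • v with hw_def
  have hwmax : ∀ i, w i ≤ c := by
    intro i
    have habs : |w i| = |v i| := by
      rw [hw_def]
      simp only [Pi.smul_apply, smul_eq_mul, abs_mul]
      rw [hs_def]
      split_ifs <;> simp
    calc w i ≤ |w i| := le_abs_self _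
    _ = |v i| := habs
    _ ≤ c := hi0 i
  have hwi0 : w i0 = c := by
    rw [hw_def, hc_def, hs_def]
    simp only [Pi.smul_apply, smul_eq_mul]
    split_ifs with h
    · rw [one_mul, abs_of_nonneg h]
    · rw [abs_of_neg (not_le.1 h)]; ring
  have hwB : (B.submatrix (Subtype.val : {x // x ∈ T} → Z) (Subtype.val : {x // x ∈ T} → Z)).mulVec w = 0 := by
    rw [hw_def, Matrix.mulVec_smul, hvB, smul_zero]
  set S : Finset Z := T.filter (fun z => ∃ h : z ∈ T, w ⟨z, h⟩ = c) with hS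
  have hScl : ∀ i ∈ S, ∀ j ∉ S, B i j = 0 := by
    intro i hiS j hjS
    rw [hS, Finset.mem_filter] at hiS
    obtain ⟨hiT, hiT2, hwi⟩ := hiS
    have h0 : ∑ k : {x // x ∈ T}, B i k.1 * w k = 0 := by
      have := congrFun hwB ⟨i, hiT⟩
      simpa [Matrix.mulVec, dotProduct, Matrix.submatrix_apply] using this
    have hrowT : ∑ k : {x // x ∈ T}, B i k.1 = ∑ j ∈ T, B i j :=
      Finset.sum_coe_sort T (fun j => B i j)
    have hcomplsum : ∑ j ∈ T, B i j + ∑ j ∈ Tᶜ, B i j = 0 := by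
      rw [Finset.sum_add_sum_compl]; exact hrow i
    have hcnonneg : 0 ≤ ∑ j ∈ Tᶜ, B i j :=
      Finset.sum_nonneg (fun j hj => hoff i j (fun hij =>
        (Finset.mem_compl.1 hj) (hij ▸ hiT)))
    have hrowle : ∑ j ∈ T, B i j ≤ 0 := by linarith
    have hfnonneg : ∀ k : {x // x ∈ T}, 0 ≤ B i k.1 * (c - w k) := by
      intro k
      by_cases hk : k.1 = i
      · have hkk : k = ⟨i, hiT⟩ := Subtype.ext hk
        rw [hkk]
        have : w ⟨i, hiT⟩ = c := hwi
        rw [this, sub_self, mul_zero]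
      · exact mul_nonneg (hoff i k.1 (fun h => hk h.symm)) (sub_nonneg.2 (hwmax k))
    have hsumf : ∑ k : {x // x ∈ T}, B i k.1 * (c - w k) = c * ∑ j ∈ T, B i j := by
      have he : ∀ k : {x // x ∈ T}, B i k.1 * (c - w k)
          = c * B i k.1 - B i k.1 * w k := fun k => by ring
      rw [Finset.sum_congr rfl (fun k _ => he k), Finset.sum_sub_distrib, h0, sub_zero,
        ← Finset.mul_sum, hrowT]
    have hge : 0 ≤ c * ∑ j ∈ T, B i j := by
      rw [← hsumf]; exact Finset.sum_nonneg (fun k _ => hfnonneg k)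
    have hle : c * ∑ j ∈ T, B i j ≤ 0 := by
      have := mul_le_mul_of_nonneg_left hrowle (le_of_lt hc)
      simpa using this
    have hrow0 : ∑ j ∈ T, B i j = 0 :=
      (mul_eq_zero.1 (le_antisymm hle hge)).resolve_left (ne_of_gt hc)
    have hsumf0 : ∑ k : {x // x ∈ T}, B i k.1 * (c - w k) = 0 := by
      rw [hsumf, hrow0, mul_zero]
    have hfzero : ∀ k : {x // x ∈ T}, B i k.1 * (c - w k) = 0 := fun k =>
      (Finset.sum_eq_zero_iff_of_nonneg (fun k _ => hfnonneg k)).1 hsumf0 k (Finset.mem_univ k)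
    have hcompl0 : ∀ j, j ∉ T → B i j = 0 := by
      have hsc : ∑ j ∈ Tᶜ, B i j = 0 := by linarith
      intro j hj
      exact (Finset.sum_eq_zero_iff_of_nonneg (fun j hj => hoff i j (fun hij =>
        (Finset.mem_compl.1 hj) (hij ▸ hiT)))).1 hsc j (Finset.mem_compl.2 hj)
    by_cases hjT : j ∈ T
    · have hjne : w ⟨j, hjT⟩ ≠ c := fun hcc => hjS (Finset.mem_filter.2 ⟨hjT, hjT, hcc⟩)
      rcases mul_eq_zero.1 (hfzero ⟨j, hjT⟩) with h | h
      · exact h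
      · exact absurd (sub_eq_zero.1 h).symm hjne
    · exact hcompl0 j hjT
  have hSne : S.Nonempty := ⟨i0.1, Finset.mem_filter.2 ⟨i0.2, i0.2, hwi0⟩⟩
  obtain ⟨r, hrS, hrec⟩ := exists_recurrent_of_closed B S hSne hScl
  exact (hT r).1 (Finset.filter_subset _ _ hrS) hrec

/-- Let `B` be a right intensity matrix with nonempty transient index set `T`
and recurrent set `R = Tᶜ`, and `P` the final limit of `exp (t • B)`. Then `P_T = 0`,
`B_{T,R} * P_R + B_T * P_{T,R} = 0`, `B_T` is invertible, and
`P_{T,R} = -B_T⁻¹ * B_{T,R} * P_R`. -/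
theorem final_limit_transient_block {Z : Type*} [Fintype Z] [DecidableEq Z]
    (B : Matrix Z Z ℝ)
    (hoff : ∀ i j, i ≠ j → 0 ≤ B i j)
    (hrow : ∀ i, ∑ j, B i j = 0)
    (T : Finset Z)
    (hT : ∀ i, i ∈ T ↔ ¬ B.Recurrent i)
    (hne : T.Nonempty)
    (P : Matrix Z Z ℝ)
    (hP : Tendsto (fun t : ℝ => NormedSpace.exp (t • B)) atTop (nhds P)) :
    Tᶜ.Nonempty ∧
    (∀ i ∈ T, ∀ j ∈ T, P i j = 0) ∧
    (B.submatrix (Subtype.val : {x // x ∈ T} → Z) (Subtype.val : {x // x ∈ Tᶜ} → Z)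
        * P.submatrix (Subtype.val : {x // x ∈ Tᶜ} → Z) (Subtype.val : {x // x ∈ Tᶜ} → Z)
      + B.submatrix (Subtype.val : {x // x ∈ T} → Z) (Subtype.val : {x // x ∈ T} → Z)
        * P.submatrix (Subtype.val : {x // x ∈ T} → Z) (Subtype.val : {x // x ∈ Tᶜ} → Z)
      = 0) ∧
    IsUnit (B.submatrix (Subtype.val : {x // x ∈ T} → Z) (Subtype.val : {x // x ∈ T} → Z)) ∧
    P.submatrix (Subtype.val : {x // x ∈ T} → Z) (Subtype.val : {x // x ∈ Tᶜ} → Z)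
      = -((B.submatrix (Subtype.val : {x // x ∈ T} → Z) (Subtype.val : {x // x ∈ T} → Z))⁻¹
          * B.submatrix (Subtype.val : {x // x ∈ T} → Z) (Subtype.val : {x // x ∈ Tᶜ} → Z)
          * P.submatrix (Subtype.val : {x // x ∈ Tᶜ} → Z)
              (Subtype.val : {x // x ∈ Tᶜ} → Z)) := by
  classical
  -- semigroup identities in the limit
  have hcomm : ∀ t s : ℝ, Commute (t • B) (s • B) := fun t s =>
    ((Commute.refl B).smul_left t).smul_right s
  have hsem : ∀ s : ℝ, P * NormedSpace.exp (s • B) = P := by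
    intro s
    have h1 : Tendsto (fun t : ℝ => NormedSpace.exp ((t + s) • B)) atTop (nhds P) :=
      hP.comp (tendsto_atTop_add_const_right atTop s tendsto_id)
    have h1' : Tendsto (fun t : ℝ => NormedSpace.exp (t • B) * NormedSpace.exp (s • B))
        atTop (nhds P) := by
      refine h1.congr (fun t => ?_)
      rw [add_smul]
      exact Matrix.exp_add_of_commute _ _ (hcomm t s)
    have h3 : Tendsto (fun t : ℝ => NormedSpace.exp (t • B) * NormedSpace.exp (s • B))
        atTop (nhds (P * NormedSpace.exp (s • B))) := hP.mul tendsto_const_nhds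
    exact tendsto_nhds_unique h3 h1'
  have hsem' : ∀ s : ℝ, NormedSpace.exp (s • B) * P = P := by
    intro s
    have h1 : Tendsto (fun t : ℝ => NormedSpace.exp ((t + s) • B)) atTop (nhds P) :=
      hP.comp (tendsto_atTop_add_const_right atTop s tendsto_id)
    have h1' : Tendsto (fun t : ℝ => NormedSpace.exp (s • B) * NormedSpace.exp (t • B))
        atTop (nhds P) := by
      refine h1.congr (fun t => ?_)
      rw [add_comm t s, add_smul]
      exact Matrix.exp_add_of_commute _ _ (hcomm s t)
    have h3 : Tendsto (fun t : ℝ => NormedSpace.exp (s • B) * NormedSpace.exp (t • B))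
        atTop (nhds (NormedSpace.exp (s • B) * P)) := tendsto_const_nhds.mul hP
    exact tendsto_nhds_unique h3 h1'
  -- derivative at 0 gives P * B = 0 and B * P = 0
  letI : SeminormedRing (Matrix Z Z ℝ) := Matrix.linftyOpSemiNormedRing
  letI : NormedRing (Matrix Z Z ℝ) := Matrix.linftyOpNormedRing
  letI : NormedAlgebra ℝ (Matrix Z Z ℝ) := Matrix.linftyOpNormedAlgebra
  letI : CompleteSpace (Matrix Z Z ℝ) := FiniteDimensional.complete ℝ _
  have hPB : P * B = 0 := by
    have hd := (hasDerivAt_exp_smul_const (𝕂 := ℝ) B (0 : ℝ)).const_mul P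
    have hconst : (fun s : ℝ => P * NormedSpace.exp (s • B)) = fun _ => P := funext hsem
    replace hd : HasDerivAt (fun _ : ℝ => P) _ 0 :=
      hd.congr_of_eventuallyEq (Filter.Eventually.of_forall fun s => (hsem s).symm)
    have h := hd.unique (hasDerivAt_const 0 P)
    rw [zero_smul, NormedSpace.exp_zero, one_mul] at h
    exact h
  have hBP : B * P = 0 := by
    have hd := (hasDerivAt_exp_smul_const' (𝕂 := ℝ) B (0 : ℝ)).mul_const P
    have hconst : (fun s : ℝ => NormedSpace.exp (s • B) * P) = fun _ => P := funext hsem'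
    replace hd : HasDerivAt (fun _ : ℝ => P) _ 0 :=
      hd.congr_of_eventuallyEq (Filter.Eventually.of_forall fun s => (hsem' s).symm)
    have h := hd.unique (hasDerivAt_const 0 P)
    rw [zero_smul, NormedSpace.exp_zero, mul_one] at h
    exact h
  -- part 1
  haveI : Nonempty Z := ⟨hne.choose⟩
  obtain ⟨r, -, hrec⟩ := exists_recurrent_of_closed B Finset.univ Finset.univ_nonempty
    (fun i _ j hj => absurd (Finset.mem_univ j) hj)
  have h1 : Tᶜ.Nonempty := ⟨r, Finset.mem_compl.2 (fun hrT => (hT r).1 hrT hrec)⟩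
  -- part 3
  have hunit : IsUnit (B.submatrix (Subtype.val : {x // x ∈ T} → Z) (Subtype.val : {x // x ∈ T} → Z)) :=
    transient_block_isUnit B hoff hrow T hT
  have hdet : IsUnit (B.submatrix (Subtype.val : {x // x ∈ T} → Z) (Subtype.val : {x // x ∈ T} → Z)).det :=
    (Matrix.isUnit_iff_isUnit_det _).1 hunit
  -- part 2
  have h2 : ∀ i, ∀ j ∈ T, P i j = 0 := by
    intro i
    set w : {x // x ∈ T} → ℝ := fun t => P i t.1 with hw_def
    have hwB : Matrix.vecMul w (B.submatrix (Subtype.val : {x // x ∈ T} → Z) (Subtype.val : {x // x ∈ T} → Z))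
        = 0 := by
      funext t
      have h0 : (P * B) i t.1 = 0 := by rw [hPB]; rfl
      rw [Matrix.mul_apply] at h0
      have hsplit : ∑ k, P i k * B k t.1
          = ∑ k ∈ T, P i k * B k t.1 + ∑ k ∈ Tᶜ, P i k * B k t.1 :=
        (Finset.sum_add_sum_compl T _).symm
      have hTc : ∑ k ∈ Tᶜ, P i k * B k t.1 = 0 := by
        refine Finset.sum_eq_zero (fun k hk => ?_)
        have hkrec : B.Recurrent k := not_not.1 (fun h => (Finset.mem_compl.1 hk) ((hT k).2 h))
        rw [recurrent_row_eq_zero hkrec ((hT t.1).1 t.2), mul_zero]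
      rw [hsplit, hTc, add_zero] at h0
      have hcoe : ∑ k : {x // x ∈ T}, P i k.1 * B k.1 t.1 = ∑ k ∈ T, P i k * B k t.1 :=
        Finset.sum_coe_sort T (fun k => P i k * B k t.1)
      show ∑ k : {x // x ∈ T}, w k * B k.1 t.1 = 0
      rw [hw_def]
      exact hcoe.trans h0
    have hw0 : w = 0 := by
      calc w = Matrix.vecMul w 1 := (Matrix.vecMul_one w).symm
      _ = Matrix.vecMul w ((B.submatrix (Subtype.val : {x // x ∈ T} → Z) (Subtype.val : {x // x ∈ T} → Z))
            * (B.submatrix (Subtype.val : {x // x ∈ T} → Z) (Subtype.val : {x // x ∈ T} → Z))⁻¹) := by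
          rw [Matrix.mul_nonsing_inv _ hdet]
      _ = Matrix.vecMul (Matrix.vecMul w
            (B.submatrix (Subtype.val : {x // x ∈ T} → Z) (Subtype.val : {x // x ∈ T} → Z)))
            (B.submatrix (Subtype.val : {x // x ∈ T} → Z) (Subtype.val : {x // x ∈ T} → Z))⁻¹ :=
          (Matrix.vecMul_vecMul _ _ _).symm
      _ = 0 := by rw [hwB, Matrix.zero_vecMul]
    intro j hj
    exact congrFun hw0 ⟨j, hj⟩
  -- part: block equation
  have h3 : B.submatrix (Subtype.val : {x // x ∈ T} → Z) (Subtype.val : {x // x ∈ Tᶜ} → Z)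
        * P.submatrix (Subtype.val : {x // x ∈ Tᶜ} → Z) (Subtype.val : {x // x ∈ Tᶜ} → Z)
      + B.submatrix (Subtype.val : {x // x ∈ T} → Z) (Subtype.val : {x // x ∈ T} → Z)
        * P.submatrix (Subtype.val : {x // x ∈ T} → Z) (Subtype.val : {x // x ∈ Tᶜ} → Z)
      = 0 := by
    ext i j
    have h0 : (B * P) i.1 j.1 = 0 := by rw [hBP]; rfl
    rw [Matrix.mul_apply] at h0
    have hsplit : ∑ k, B i.1 k * P k j.1
        = ∑ k ∈ T, B i.1 k * P k j.1 + ∑ k ∈ Tᶜ, B i.1 k * P k j.1 :=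
      (Finset.sum_add_sum_compl T _).symm
    simp only [Matrix.add_apply, Matrix.mul_apply, Matrix.submatrix_apply, Matrix.zero_apply]
    have e1 : ∑ k : {x // x ∈ Tᶜ}, B i.1 k.1 * P k.1 j.1 = ∑ k ∈ Tᶜ, B i.1 k * P k j.1 :=
      Finset.sum_coe_sort Tᶜ (fun k => B i.1 k * P k j.1)
    have e2 : ∑ k : {x // x ∈ T}, B i.1 k.1 * P k.1 j.1 = ∑ k ∈ T, B i.1 k * P k j.1 :=
      Finset.sum_coe_sort T (fun k => B i.1 k * P k j.1)
    rw [e1, e2]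
    rw [hsplit] at h0
    linarith
  refine ⟨h1, fun i _ j hj => h2 i j hj, h3, hunit, ?_⟩
  -- final formula
  have h5 : B.submatrix (Subtype.val : {x // x ∈ T} → Z) (Subtype.val : {x // x ∈ T} → Z)
      * P.submatrix (Subtype.val : {x // x ∈ T} → Z) (Subtype.val : {x // x ∈ Tᶜ} → Z)
      = -(B.submatrix (Subtype.val : {x // x ∈ T} → Z) (Subtype.val : {x // x ∈ Tᶜ} → Z)
          * P.submatrix (Subtype.val : {x // x ∈ Tᶜ} → Z)
              (Subtype.val : {x // x ∈ Tᶜ} → Z)) :=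
    eq_neg_of_add_eq_zero_right h3
  calc P.submatrix (Subtype.val : {x // x ∈ T} → Z) (Subtype.val : {x // x ∈ Tᶜ} → Z)
      = ((B.submatrix (Subtype.val : {x // x ∈ T} → Z) (Subtype.val : {x // x ∈ T} → Z))⁻¹
          * B.submatrix (Subtype.val : {x // x ∈ T} → Z) (Subtype.val : {x // x ∈ T} → Z))
          * P.submatrix (Subtype.val : {x // x ∈ T} → Z) (Subtype.val : {x // x ∈ Tᶜ} → Z) := by
        rw [Matrix.nonsing_inv_mul _ hdet, Matrix.one_mul]
  _ = (B.submatrix (Subtype.val : {x // x ∈ T} → Z) (Subtype.val : {x // x ∈ T} → Z))⁻¹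
        * (B.submatrix (Subtype.val : {x // x ∈ T} → Z) (Subtype.val : {x // x ∈ T} → Z)
          * P.submatrix (Subtype.val : {x // x ∈ T} → Z) (Subtype.val : {x // x ∈ Tᶜ} → Z)) := by
        rw [Matrix.mul_assoc]
  _ = -((B.submatrix (Subtype.val : {x // x ∈ T} → Z) (Subtype.val : {x // x ∈ T} → Z))⁻¹
        * B.submatrix (Subtype.val : {x // x ∈ T} → Z) (Subtype.val : {x // x ∈ Tᶜ} → Z)
        * P.submatrix (Subtype.val : {x // x ∈ Tᶜ} → Z) (Subtype.val : {x // x ∈ Tᶜ} → Z)) := by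
        rw [h5, Matrix.mul_neg, Matrix.mul_assoc]
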